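/- Let k ≥ 3 and G = C(2k+1; {1,3}), and let e = v_1 v_2 be an edge of the Hamilton cycle. Then the set S = {v_{2i+1} : 1 ≤ i ≤ k} is a vertex cut of G−e with |S| = k and c((G−e)−S) = k−1; consequently τ(G−e) ≤ k/(k−1) < (k+1)/(k−1). -/

import Mathlib

open SimpleGraph

def circGraph (n : ℕ) (s : Set (ZMod n)) : SimpleGraph (ZMod n) where
  Adj i j := i ≠ j ∧ (i - j ∈ s ∨ j - i ∈ s)
  symm := ⟨fun i j h => ⟨h.1.symm, h.2.symm⟩⟩
  loopless := ⟨fun i h => h.1 rfl⟩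

/-- Number of connected components of `G - S`. -/
noncomputable def numComp {V : Type*} (G : SimpleGraph V) (S : Set V) : ℕ :=
  Nat.card ((G.induce Sᶜ).ConnectedComponent)

/-- `S` is a vertex cut: removing `S` leaves a disconnected graph. -/
def IsVertexCut {V : Type*} (G : SimpleGraph V) (S : Set V) : Prop :=
  1 < numComp G S

/-- Toughness: minimum of |S| / c(G - S) over vertex cuts `S`. -/
noncomputable def toughness {V : Type*} (G : SimpleGraph V) : ℝ :=
  sInf {x : ℝ | ∃ S : Set V, IsVertexCut G S ∧ x = (S.ncard : ℝ) / (numComp G S : ℝ)}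

def MinimallyTough {V : Type*} (G : SimpleGraph V) (t : ℝ) : Prop :=
  toughness G = t ∧ ∀ e ∈ G.edgeSet, toughness (G.deleteEdges {e}) < t

/- ### Auxiliary material -/

lemma circGraph_adj {n : ℕ} {s : Set (ZMod n)} {x y : ZMod n} :
    (circGraph n s).Adj x y ↔ x ≠ y ∧ (x - y ∈ s ∨ y - x ∈ s) := Iff.rfl

section Aux

variable (k : ℕ)

instance : NeZero (2*k+1) := ⟨by omega⟩

/-- the cut set -/
def cutS : Set (ZMod (2*k+1)) :=
  {v | ∃ i : ℕ, 1 ≤ i ∧ i ≤ k ∧ v = ((2*i+1 : ℕ) : ZMod (2*k+1))}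

/-- the graph minus the edge -/
def Gdel : SimpleGraph (ZMod (2*k+1)) :=
  (circGraph (2*k+1) {1, 3}).deleteEdges
    {s(((1 : ℕ) : ZMod (2*k+1)), ((2 : ℕ) : ZMod (2*k+1)))}

variable {k}

lemma val_eq_iff {x y : ZMod (2*k+1)} : x = y ↔ x.val = y.val :=
  ⟨fun h => congrArg _ h, fun h => ZMod.val_injective _ h⟩

lemma val_natCast_of_lt (m : ℕ) (h : m < 2*k+1) : ((m : ℕ) : ZMod (2*k+1)).val = m := by
  rw [ZMod.val_natCast, Nat.mod_eq_of_lt h]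

lemma mem_cutS_iff (hk : 3 ≤ k) (x : ZMod (2*k+1)) :
    x ∈ cutS k ↔ (x.val = 0 ∨ (x.val % 2 = 1 ∧ 3 ≤ x.val)) := by
  have hv : x.val < 2*k+1 := ZMod.val_lt x
  constructor
  · rintro ⟨i, h1, h2, rfl⟩
    rcases eq_or_lt_of_le h2 with rfl | hik
    · left
      rw [ZMod.val_natCast, Nat.mod_self]
    · right
      rw [val_natCast_of_lt (2*i+1) (by omega)]
      omega
  · intro h
    rcases h with h0 | ⟨hodd, h3⟩
    · refine ⟨k, by omega, le_refl k, ?_⟩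
      rw [val_eq_iff, h0, ZMod.val_natCast, Nat.mod_self]
    · refine ⟨x.val / 2, by omega, by omega, ?_⟩
      rw [val_eq_iff, val_natCast_of_lt (2*(x.val/2)+1) (by omega)]
      omega

lemma mem_cutS_compl_iff (hk : 3 ≤ k) (x : ZMod (2*k+1)) :
    x ∈ (cutS k)ᶜ ↔ (x.val = 1 ∨ (x.val ≠ 0 ∧ x.val % 2 = 0)) := by
  have hv : x.val < 2*k+1 := ZMod.val_lt x
  rw [Set.mem_compl_iff, mem_cutS_iff hk]
  omega

lemma mod_helper {m : ℕ} (hm : m < 2*(2*k+1)) :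
    (m % (2*k+1) = m ∧ m < 2*k+1) ∨ (m % (2*k+1) = m - (2*k+1) ∧ 2*k+1 ≤ m) := by
  rcases lt_or_ge m (2*k+1) with h | h
  · exact Or.inl ⟨Nat.mod_eq_of_lt h, h⟩
  · refine Or.inr ⟨?_, h⟩
    rw [Nat.mod_eq_sub_mod h, Nat.mod_eq_of_lt (by omega)]

lemma val_one' (hk : 3 ≤ k) : (1 : ZMod (2*k+1)).val = 1 := by
  rw [show (1 : ZMod (2*k+1)) = ((1:ℕ) : ZMod (2*k+1)) by norm_cast]
  exact val_natCast_of_lt (k := k) 1 (by omega)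

lemma val_three (hk : 3 ≤ k) : (3 : ZMod (2*k+1)).val = 3 := by
  rw [show (3 : ZMod (2*k+1)) = ((3:ℕ) : ZMod (2*k+1)) by norm_cast]
  exact val_natCast_of_lt (k := k) 3 (by omega)

set_option maxHeartbeats 1000000 in
lemma adj_classify (hk : 3 ≤ k) {x y : ZMod (2*k+1)}
    (hx : x.val = 1 ∨ (x.val ≠ 0 ∧ x.val % 2 = 0))
    (hy : y.val = 1 ∨ (y.val ≠ 0 ∧ y.val % 2 = 0))
    (h : (Gdel k).Adj x y) :
    (x.val = 1 ∧ y.val = 4) ∨ (x.val = 4 ∧ y.val = 1) ∨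
      (x.val = 2 ∧ y.val = 2*k) ∨ (x.val = 2*k ∧ y.val = 2) := by
  have hvx : x.val < 2*k+1 := ZMod.val_lt x
  have hvy : y.val < 2*k+1 := ZMod.val_lt y
  rw [Gdel, deleteEdges_adj, circGraph_adj] at h
  obtain ⟨⟨hne, hd⟩, hdel⟩ := h
  have hne' : x.val ≠ y.val := fun hc => hne (val_eq_iff.mpr hc)
  have e1 : ((1:ℕ) : ZMod (2*k+1)).val = 1 := val_natCast_of_lt 1 (by omega)
  have e2 : ((2:ℕ) : ZMod (2*k+1)).val = 2 := val_natCast_of_lt 2 (by omega)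
  have hdel' : ¬((x.val = 1 ∧ y.val = 2) ∨ (x.val = 2 ∧ y.val = 1)) := by
    intro hc
    apply hdel
    rw [Set.mem_singleton_iff, Sym2.eq_iff]
    rcases hc with ⟨h1, h2⟩ | ⟨h1, h2⟩
    · exact Or.inl ⟨val_eq_iff.mpr (by rw [h1, e1]),
        val_eq_iff.mpr (by rw [h2, e2])⟩
    · exact Or.inr ⟨val_eq_iff.mpr (by rw [h1, e2]),
        val_eq_iff.mpr (by rw [h2, e1])⟩
  simp only [Set.mem_insert_iff, Set.mem_singleton_iff] at hd
  have key : ∀ a b : ZMod (2*k+1), a - b = 1 ∨ a - b = 3 →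
      a.val = (b.val + 1) % (2*k+1) ∨ a.val = (b.val + 3) % (2*k+1) := by
    intro a b hab
    rcases hab with hab | hab
    · left
      have : a = b + 1 := by rw [← hab]; ring
      rw [this, ZMod.val_add, val_one' hk]
    · right
      have : a = b + 3 := by rw [← hab]; ring
      rw [this, ZMod.val_add, val_three hk]
  rcases hd with hd | hd
  · have := key x y hd
    rcases this with h' | h'
    · rcases mod_helper (k := k) (m := y.val + 1) (by omega) with ⟨he, _⟩ | ⟨he, _⟩ <;>
        rw [he] at h' <;> omega
    · rcases mod_helper (k := k) (m := y.val + 3) (by omega) with ⟨he, _⟩ | ⟨he, _⟩ <;>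
        rw [he] at h' <;> omega
  · have := key y x hd
    rcases this with h' | h'
    · rcases mod_helper (k := k) (m := x.val + 1) (by omega) with ⟨he, _⟩ | ⟨he, _⟩ <;>
        rw [he] at h' <;> omega
    · rcases mod_helper (k := k) (m := x.val + 3) (by omega) with ⟨he, _⟩ | ⟨he, _⟩ <;>
        rw [he] at h' <;> omega

lemma adj_14 (hk : 3 ≤ k) :
    (Gdel k).Adj ((1:ℕ) : ZMod (2*k+1)) ((4:ℕ) : ZMod (2*k+1)) := by
  have e1 : ((1:ℕ) : ZMod (2*k+1)).val = 1 := val_natCast_of_lt 1 (by omega)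
  have e2 : ((2:ℕ) : ZMod (2*k+1)).val = 2 := val_natCast_of_lt 2 (by omega)
  have e4 : ((4:ℕ) : ZMod (2*k+1)).val = 4 := val_natCast_of_lt 4 (by omega)
  rw [Gdel, deleteEdges_adj, circGraph_adj]
  refine ⟨⟨?_, ?_⟩, ?_⟩
  · intro hc
    rw [val_eq_iff, e1, e4] at hc
    omega
  · right
    have h3 : ((4:ℕ) : ZMod (2*k+1)) - ((1:ℕ) : ZMod (2*k+1)) = 3 := by push_cast; ring
    rw [h3]
    exact Or.inr rfl
  · rw [Set.mem_singleton_iff, Sym2.eq_iff]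
    rintro (⟨h1, h2⟩ | ⟨h1, h2⟩)
    · rw [val_eq_iff, e4, e2] at h2; omega
    · rw [val_eq_iff, e1, e2] at h1; omega

lemma adj_2_2k (hk : 3 ≤ k) :
    (Gdel k).Adj ((2:ℕ) : ZMod (2*k+1)) ((2*k : ℕ) : ZMod (2*k+1)) := by
  have e1 : ((1:ℕ) : ZMod (2*k+1)).val = 1 := val_natCast_of_lt 1 (by omega)
  have e2 : ((2:ℕ) : ZMod (2*k+1)).val = 2 := val_natCast_of_lt 2 (by omega)
  have e2k : ((2*k:ℕ) : ZMod (2*k+1)).val = 2*k := val_natCast_of_lt (2*k) (by omega)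
  rw [Gdel, deleteEdges_adj, circGraph_adj]
  refine ⟨⟨?_, ?_⟩, ?_⟩
  · intro hc
    rw [val_eq_iff, e2, e2k] at hc
    omega
  · left
    have h0 : ((2*k+1 : ℕ) : ZMod (2*k+1)) = 0 := ZMod.natCast_self _
    have : ((2:ℕ) : ZMod (2*k+1)) - ((2*k : ℕ) : ZMod (2*k+1)) = 3 := by
      have h2 : ((2*k : ℕ) : ZMod (2*k+1)) = ((2*k+1 : ℕ) : ZMod (2*k+1)) - 1 := by
        push_cast; ring
      rw [h2, h0]; ring
    rw [this]
    exact Or.inr rfl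
  · rw [Set.mem_singleton_iff, Sym2.eq_iff]
    rintro (⟨h1, h2⟩ | ⟨h1, h2⟩)
    · rw [val_eq_iff, e2, e1] at h1; omega
    · rw [val_eq_iff, e2k, e1] at h2; omega

/-- label of a vertex, constant on components of the cut graph. -/
def lab (k : ℕ) (x : ZMod (2*k+1)) : ℕ :=
  if x.val = 1 ∨ x.val = 4 then 0
  else if x.val = 2 ∨ x.val = 2*k then 1
  else x.val / 2 - 1

lemma lab_lt (hk : 3 ≤ k) {x : ZMod (2*k+1)}
    (hx : x.val = 1 ∨ (x.val ≠ 0 ∧ x.val % 2 = 0)) : lab k x < k - 1 := by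
  have hv : x.val < 2*k+1 := ZMod.val_lt x
  unfold lab
  split_ifs <;> omega

lemma numComp_cut (hk : 3 ≤ k) : numComp (Gdel k) (cutS k) = k - 1 := by
  classical
  set H := (Gdel k).induce (cutS k)ᶜ with hH
  have hmem : ∀ v : ↥(cutS k)ᶜ, (v : ZMod (2*k+1)).val = 1 ∨
      ((v : ZMod (2*k+1)).val ≠ 0 ∧ (v : ZMod (2*k+1)).val % 2 = 0) :=
    fun v => (mem_cutS_compl_iff hk _).mp v.2
  have hadjH : ∀ v w : ↥(cutS k)ᶜ, H.Adj v w → (Gdel k).Adj v.1 w.1 := by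
    intro v w h
    exact h
  -- labels are constant along edges
  have hinv : ∀ v w : ↥(cutS k)ᶜ, H.Adj v w → lab k v.1 = lab k w.1 := by
    intro v w h
    have := adj_classify hk (hmem v) (hmem w) (hadjH v w h)
    have hineq : (2*k ≠ 1 ∧ 2*k ≠ 4 ∧ 2*k ≠ 2) := by omega
    unfold lab
    rcases this with ⟨h1, h2⟩ | ⟨h1, h2⟩ | ⟨h1, h2⟩ | ⟨h1, h2⟩ <;>
      rw [h1, h2] <;> split_ifs <;> omega
  have hwalk : ∀ (v w : ↥(cutS k)ᶜ) (p : H.Walk v w), lab k v.1 = lab k w.1 := by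
    intro v w p
    induction p with
    | nil => rfl
    | cons h p ih => exact (hinv _ _ h).trans ih
  let f : ↥(cutS k)ᶜ → Fin (k-1) := fun v => ⟨lab k v.1, lab_lt hk (hmem v)⟩
  let F : H.ConnectedComponent → Fin (k-1) :=
    ConnectedComponent.lift f (fun v w p _ => Fin.ext (hwalk v w p))
  -- membership facts for the special vertices
  have e1 : ((1:ℕ) : ZMod (2*k+1)).val = 1 := val_natCast_of_lt 1 (by omega)
  have e2 : ((2:ℕ) : ZMod (2*k+1)).val = 2 := val_natCast_of_lt 2 (by omega)
  have e4 : ((4:ℕ) : ZMod (2*k+1)).val = 4 := val_natCast_of_lt 4 (by omega)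
  have e2k : ((2*k:ℕ) : ZMod (2*k+1)).val = 2*k := val_natCast_of_lt (2*k) (by omega)
  have m1 : ((1:ℕ) : ZMod (2*k+1)) ∈ (cutS k)ᶜ := by
    rw [mem_cutS_compl_iff hk, e1]; omega
  have m4 : ((4:ℕ) : ZMod (2*k+1)) ∈ (cutS k)ᶜ := by
    rw [mem_cutS_compl_iff hk, e4]; omega
  have m2 : ((2:ℕ) : ZMod (2*k+1)) ∈ (cutS k)ᶜ := by
    rw [mem_cutS_compl_iff hk, e2]; omega
  have m2k : ((2*k : ℕ) : ZMod (2*k+1)) ∈ (cutS k)ᶜ := by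
    rw [mem_cutS_compl_iff hk, e2k]; omega
  have hadj14 : H.Adj ⟨((1:ℕ) : ZMod (2*k+1)), m1⟩ ⟨((4:ℕ) : ZMod (2*k+1)), m4⟩ :=
    adj_14 hk
  have hadj22k : H.Adj ⟨((2:ℕ) : ZMod (2*k+1)), m2⟩ ⟨((2*k:ℕ) : ZMod (2*k+1)), m2k⟩ :=
    adj_2_2k hk
  have hbij : Function.Bijective F := by
    constructor
    · refine ConnectedComponent.ind₂ ?_
      intro v w hFvw
      have hlab : lab k v.1 = lab k w.1 := congrArg Fin.val hFvw
      apply ConnectedComponent.sound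
      -- trichotomy from labels
      have hv : v.1.val < 2*k+1 := ZMod.val_lt _
      have hw : w.1.val < 2*k+1 := ZMod.val_lt _
      have trich : v.1.val = w.1.val ∨
          ((v.1.val = 1 ∨ v.1.val = 4) ∧ (w.1.val = 1 ∨ w.1.val = 4)) ∨
          ((v.1.val = 2 ∨ v.1.val = 2*k) ∧ (w.1.val = 2 ∨ w.1.val = 2*k)) := by
        have h1 := hmem v
        have h2 := hmem w
        unfold lab at hlab
        split_ifs at hlab <;> omega
      rcases trich with he | ⟨hv1, hw1⟩ | ⟨hv1, hw1⟩
      · have : v = w := Subtype.ext (val_eq_iff.mpr he)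
        rw [this]
      · have hv' : v = ⟨((1:ℕ) : ZMod (2*k+1)), m1⟩ ∨ v = ⟨((4:ℕ) : ZMod (2*k+1)), m4⟩ := by
          rcases hv1 with h | h
          · exact Or.inl (Subtype.ext (val_eq_iff.mpr (by rw [h, e1])))
          · exact Or.inr (Subtype.ext (val_eq_iff.mpr (by rw [h, e4])))
        have hw' : w = ⟨((1:ℕ) : ZMod (2*k+1)), m1⟩ ∨ w = ⟨((4:ℕ) : ZMod (2*k+1)), m4⟩ := by
          rcases hw1 with h | h
          · exact Or.inl (Subtype.ext (val_eq_iff.mpr (by rw [h, e1])))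
          · exact Or.inr (Subtype.ext (val_eq_iff.mpr (by rw [h, e4])))
        rcases hv' with rfl | rfl <;> rcases hw' with rfl | rfl
        · exact Reachable.refl _
        · exact hadj14.reachable
        · exact hadj14.symm.reachable
        · exact Reachable.refl _
      · have hv' : v = ⟨((2:ℕ) : ZMod (2*k+1)), m2⟩ ∨ v = ⟨((2*k:ℕ) : ZMod (2*k+1)), m2k⟩ := by
          rcases hv1 with h | h
          · exact Or.inl (Subtype.ext (val_eq_iff.mpr (by rw [h, e2])))
          · exact Or.inr (Subtype.ext (val_eq_iff.mpr (by rw [h, e2k])))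
        have hw' : w = ⟨((2:ℕ) : ZMod (2*k+1)), m2⟩ ∨ w = ⟨((2*k:ℕ) : ZMod (2*k+1)), m2k⟩ := by
          rcases hw1 with h | h
          · exact Or.inl (Subtype.ext (val_eq_iff.mpr (by rw [h, e2])))
          · exact Or.inr (Subtype.ext (val_eq_iff.mpr (by rw [h, e2k])))
        rcases hv' with rfl | rfl <;> rcases hw' with rfl | rfl
        · exact Reachable.refl _
        · exact hadj22k.reachable
        · exact hadj22k.symm.reachable
        · exact Reachable.refl _
    · rintro ⟨m, hm⟩
      rcases Nat.lt_or_ge m 2 with hm2 | hm2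
      · interval_cases m
        · refine ⟨H.connectedComponentMk ⟨((1:ℕ) : ZMod (2*k+1)), m1⟩, ?_⟩
          apply Fin.ext
          show lab k _ = 0
          unfold lab
          rw [e1]
          split_ifs <;> omega
        · refine ⟨H.connectedComponentMk ⟨((2:ℕ) : ZMod (2*k+1)), m2⟩, ?_⟩
          apply Fin.ext
          show lab k _ = 1
          unfold lab
          rw [e2]
          split_ifs <;> omega
      · have em : ((2*(m+1):ℕ) : ZMod (2*k+1)).val = 2*(m+1) :=
          val_natCast_of_lt (2*(m+1)) (by omega)
        have hmem' : ((2*(m+1) : ℕ) : ZMod (2*k+1)) ∈ (cutS k)ᶜ := by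
          rw [mem_cutS_compl_iff hk, em]; omega
        refine ⟨H.connectedComponentMk ⟨((2*(m+1) : ℕ) : ZMod (2*k+1)), hmem'⟩, ?_⟩
        apply Fin.ext
        show lab k _ = m
        unfold lab
        rw [em]
        split_ifs <;> omega
  have := Nat.card_eq_of_bijective F hbij
  rw [numComp, ← hH, this, Nat.card_eq_fintype_card, Fintype.card_fin]

lemma cutS_ncard (hk : 3 ≤ k) : (cutS k).ncard = k := by
  classical
  have hval : ∀ i : ℕ, 1 ≤ i → i ≤ k →
      ((2*i+1 : ℕ) : ZMod (2*k+1)).val = if i = k then 0 else 2*i+1 := by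
    intro i h1 h2
    split_ifs with h
    · subst h; rw [ZMod.val_natCast, Nat.mod_self]
    · exact val_natCast_of_lt (2*i+1) (by omega)
  have himg : cutS k = (fun i : ℕ => ((2*i+1 : ℕ) : ZMod (2*k+1))) '' (Set.Icc 1 k) := by
    ext v
    simp only [cutS, Set.mem_setOf_eq, Set.mem_image, Set.mem_Icc]
    constructor
    · rintro ⟨i, h1, h2, rfl⟩; exact ⟨i, ⟨h1, h2⟩, rfl⟩
    · rintro ⟨i, ⟨h1, h2⟩, rfl⟩; exact ⟨i, h1, h2, rfl⟩
  rw [himg, Set.ncard_image_of_injOn, ← Finset.coe_Icc, Set.ncard_coe_finset, Nat.card_Icc]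
  · omega
  · rintro i ⟨hi1, hi2⟩ j ⟨hj1, hj2⟩ hij
    have := congrArg ZMod.val hij
    rw [hval i hi1 hi2, hval j hj1 hj2] at this
    split_ifs at this <;> omega

end Aux

theorem stmt5 (k : ℕ) (hk : 3 ≤ k) :
    let G := circGraph (2*k+1) {1, 3}
    let G' := G.deleteEdges {s(((1 : ℕ) : ZMod (2*k+1)), ((2 : ℕ) : ZMod (2*k+1)))}
    let S : Set (ZMod (2*k+1)) :=
      {v | ∃ i : ℕ, 1 ≤ i ∧ i ≤ k ∧ v = ((2*i+1 : ℕ) : ZMod (2*k+1))}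
    IsVertexCut G' S ∧ S.ncard = k ∧ numComp G' S = k - 1 ∧
      toughness G' ≤ (k : ℝ) / ((k : ℝ) - 1) ∧
      (k : ℝ) / ((k : ℝ) - 1) < ((k : ℝ) + 1) / ((k : ℝ) - 1) := by
  intro G G' S
  have hG' : G' = Gdel k := rfl
  have hS : S = cutS k := rfl
  have hnum : numComp G' S = k - 1 := by rw [hG', hS]; exact numComp_cut hk
  have hcut : IsVertexCut G' S := by rw [IsVertexCut, hnum]; omega
  have hcard : S.ncard = k := by rw [hS]; exact cutS_ncard hk
  refine ⟨hcut, hcard, hnum, ?_, ?_⟩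
  · apply csInf_le
    · refine ⟨0, ?_⟩
      rintro x ⟨T, hT, rfl⟩
      positivity
    · refine ⟨S, hcut, ?_⟩
      rw [hcard, hnum, Nat.cast_sub (by omega), Nat.cast_one]
  · have hpos : (0:ℝ) < (k:ℝ) - 1 := by
      have : (3:ℝ) ≤ (k:ℝ) := by exact_mod_cast hk
      linarith
    apply div_lt_div_of_pos_right ?_ hpos
    linarith
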